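/- (Lemma 4: decomposition of a sheaf of modules whose support is a disjoint union.) Suppose Z_1 and Z_2 are disjoint closed subsets of X such that the stalk M_x vanishes for every x ∉ Z_1 ∪ Z_2. For i = 1, 2 define N_i by N_i(U) = {s ∈ M(U) : the germ s_x is 0 for every x ∈ U \ Z_i}. Then N_1 and N_2 are subsheaves of R-modules of M, and the canonical morphism N_1 ⊕ N_2 → M is an isomorphism of sheaves of R-modules. -/

import Mathlib

open CategoryTheory TopologicalSpace Opposite

/-- For a presheaf of abelian groups `M` on a space `X`, a set `Z ⊆ X` and an open `U`,
the set of sections `s ∈ M(U)` whose germ vanishes at every point of `U \ Z`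
(i.e. `s` restricts to `0` on a neighbourhood of every such point). -/
def sectionsVanishingOutside {X : TopCat} (M : TopCat.Presheaf AddCommGrpCat X)
    (Z : Set X) (U : Opens X) : Set (M.obj (op U)) :=
  {s | ∀ x ∈ (U : Set X), x ∉ Z →
    ∃ V : Opens X, x ∈ V ∧ ∃ hVU : V ≤ U, M.map (homOfLE hVU).op s = 0}

universe x u

namespace DecompAux

/-- The integers, lifted to universe `u`, as an object of `AddCommGrp.{u}`. -/
def myE : AddCommGrpCat.{u} := AddCommGrpCat.of (ULift.{u, 0} ℤ)

/-- The hom `ℤ → A` corresponding to an element `a : A`. -/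
def em {A : AddCommGrpCat.{u}} (a : A) : myE.{u} ⟶ A :=
  AddCommGrpCat.ofHom ((zmultiplesHom A a).comp AddEquiv.ulift.toAddMonoidHom : _ →+ _)

/-- Evaluation of a hom `ℤ → A` at `1`. -/
def ev {A : AddCommGrpCat.{u}} (h : myE.{u} ⟶ A) : A := h (ULift.up 1)

lemma em_apply {A : AddCommGrpCat.{u}} (a : A) (n : ULift.{u,0} ℤ) : em a n = n.down • a := rfl

lemma ev_em {A : AddCommGrpCat.{u}} (a : A) : ev (em a) = a := one_zsmul a

lemma em_ev {A : AddCommGrpCat.{u}} (h : myE.{u} ⟶ A) : em (ev h) = h := by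
  ext ⟨n⟩
  rw [em_apply]
  show n • h (ULift.up 1) = h (ULift.up n)
  refine (map_zsmul (ConcreteCategory.hom h) n (ULift.up 1 : myE.{u})).symm.trans ?_
  apply congrArg
  exact ULift.down_injective (by rw [ULift.smul_down]; exact (smul_eq_mul n (1 : ℤ)).trans (mul_one n))

lemma em_comp {A B : AddCommGrpCat.{u}} (a : A) (f : A ⟶ B) : em a ≫ f = em (f a) := by
  ext ⟨n⟩
  show f (em a (ULift.up n)) = em (f a) (ULift.up n)
  rw [em_apply, em_apply, map_zsmul]

lemma em_inj {A : AddCommGrpCat.{u}} {a b : A} (h : em a = em b) : a = b := by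
  rw [← ev_em a, ← ev_em b, h]

/-- Unique gluing for a type-valued sheaf over an arbitrary open covered by a family. -/
lemma typeGlue {X : TopCat.{x}} {P : TopCat.Presheaf (Type u) X} (hP : P.IsSheaf)
    {ι : Type x} (Us : ι → Opens X) (V : Opens X) (iUV : ∀ i, Us i ⟶ V)
    (hcover : V ≤ iSup Us) (sf : ∀ i, P.obj (op (Us i)))
    (hc : ∀ i j, P.map (Opens.infLELeft (Us i) (Us j)).op (sf i)
        = P.map (Opens.infLERight (Us i) (Us j)).op (sf j)) :
    ∃! s : P.obj (op V), ∀ i, P.map (iUV i).op s = sf i := by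
  have hVeq : V = iSup Us := le_antisymm hcover (iSup_le fun i => (iUV i).le)
  subst hVeq
  have h2 : ∀ i, iUV i = Opens.leSupr Us i := fun i => Subsingleton.elim _ _
  simp_rw [h2]
  exact (TopCat.Presheaf.isSheaf_iff_isSheafUniqueGluing_types P).1 hP Us sf hc

/-- Unique gluing for an `AddCommGrp`-valued sheaf, with no universe constraints. -/
lemma addGlue {X : TopCat.{x}} {M : TopCat.Presheaf AddCommGrpCat.{u} X} (hM : M.IsSheaf)
    {ι : Type x} (Us : ι → Opens X) (V : Opens X) (iUV : ∀ i, Us i ⟶ V)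
    (hcover : V ≤ iSup Us) (sf : ∀ i, M.obj (op (Us i)))
    (hc : ∀ i j, M.map (Opens.infLELeft (Us i) (Us j)).op (sf i)
        = M.map (Opens.infLERight (Us i) (Us j)).op (sf j)) :
    ∃! s : M.obj (op V), ∀ i, M.map (iUV i).op s = sf i := by
  set P : TopCat.Presheaf (Type u) X := M ⋙ coyoneda.obj (op myE.{u}) with hPdef
  have hP : P.IsSheaf :=
    (CategoryTheory.isSheaf_iff_isSheaf_of_type _ _).2 (hM myE.{u})
  have hPmap : ∀ {A B : Opens X} (f : A ⟶ B) (a : M.obj (op B)),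
      P.map f.op (em a) = em (M.map f.op a) := by
    intro A B f a
    show em a ≫ M.map f.op = _
    rw [em_comp]
  obtain ⟨t, ht, huniq⟩ := typeGlue hP Us V iUV hcover (fun i => em (sf i)) (by
    intro i j
    show P.map _ (em (sf i)) = P.map _ (em (sf j))
    rw [hPmap, hPmap, hc i j])
  refine ⟨ev t, fun i => ?_, fun s' hs' => ?_⟩
  · have : P.map (iUV i).op (em (ev t)) = em (sf i) := by rw [em_ev]; exact ht i
    rw [hPmap] at this
    exact em_inj this
  · have : em s' = t := huniq (em s') (fun i => by rw [hPmap, hs' i])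
    rw [← this, ev_em]

lemma decomp_map_map {X : TopCat.{x}} (M : TopCat.Presheaf AddCommGrpCat.{u} X)
    {a b c : Opens X} (hab : a ≤ b) (hbc : b ≤ c) (s : M.obj (op c)) :
    M.map (homOfLE hab).op (M.map (homOfLE hbc).op s)
      = M.map (homOfLE (hab.trans hbc)).op s := by
  rw [← CategoryTheory.comp_apply, ← M.map_comp, ← op_comp, homOfLE_comp]

/-- A section of a sheaf of abelian groups which vanishes locally is zero. -/
lemma decomp_eq_zero_of_locally_zero {X : TopCat.{x}}
    {M : TopCat.Presheaf AddCommGrpCat.{u} X} (hM : M.IsSheaf)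
    (U : Opens X) (s : M.obj (op U))
    (h : ∀ x ∈ (U : Set X), ∃ V : Opens X, x ∈ V ∧ ∃ hVU : V ≤ U,
        M.map (homOfLE hVU).op s = 0) : s = 0 := by
  choose V hxV hVU hzero using h
  obtain ⟨t, -, huniq⟩ := addGlue hM (fun i : (U : Set X) => V i i.2) U
      (fun i => homOfLE (hVU i i.2))
      (fun x hx => Opens.mem_iSup.2 ⟨⟨x, hx⟩, hxV x hx⟩)
      (fun _ => 0) (fun i j => by rw [map_zero, map_zero])
  have h1 : s = t := huniq s (fun i => hzero i i.2)
  have h2 : (0 : M.obj (op U)) = t := huniq 0 (fun i => map_zero _)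
  rw [h1, ← h2]

end DecompAux

theorem decomposition_disjoint_support {X : TopCat}
    (R : TopCat.Presheaf RingCat X) (M : TopCat.Presheaf AddCommGrpCat X)
    (hR : R.IsSheaf) (hM : M.IsSheaf)
    (inst : ∀ U : (Opens X)ᵒᵖ, Module (R.obj U) (M.obj U))
    (hcomp : ∀ {U V : (Opens X)ᵒᵖ} (f : U ⟶ V) (r : R.obj U) (m : M.obj U),
      M.map f (r • m) = R.map f r • M.map f m)
    (Z₁ Z₂ : Set X) (hZ₁ : IsClosed Z₁) (hZ₂ : IsClosed Z₂) (hdisj : Disjoint Z₁ Z₂)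
    (hstalk : ∀ (U : Opens X) (s : M.obj (op U)) (x : X), x ∈ (U : Set X) →
      x ∉ Z₁ ∪ Z₂ →
      ∃ V : Opens X, x ∈ V ∧ ∃ hVU : V ≤ U, M.map (homOfLE hVU).op s = 0) :
    (∀ Z ∈ ({Z₁, Z₂} : Set (Set X)), ∀ U : Opens X,
      (0 : M.obj (op U)) ∈ sectionsVanishingOutside M Z U ∧
      (∀ s t : M.obj (op U), s ∈ sectionsVanishingOutside M Z U →
        t ∈ sectionsVanishingOutside M Z U →
        s + t ∈ sectionsVanishingOutside M Z U) ∧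
      (∀ (r : R.obj (op U)) (s : M.obj (op U)), s ∈ sectionsVanishingOutside M Z U →
        r • s ∈ sectionsVanishingOutside M Z U)) ∧
    (∀ Z ∈ ({Z₁, Z₂} : Set (Set X)), ∀ (U V : Opens X) (hVU : V ≤ U)
        (s : M.obj (op U)), s ∈ sectionsVanishingOutside M Z U →
      M.map (homOfLE hVU).op s ∈ sectionsVanishingOutside M Z V) ∧
    (∀ (U : Opens X) (m : M.obj (op U)),
      ∃! p : (sectionsVanishingOutside M Z₁ U) × (sectionsVanishingOutside M Z₂ U),
        (p.1 : M.obj (op U)) + (p.2 : M.obj (op U)) = m) := by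
  refine ⟨?_, ?_, ?_⟩
  · -- submodule properties
    intro Z _ U
    refine ⟨?_, ?_, ?_⟩
    · intro x hx _
      exact ⟨U, hx, le_refl U, by rw [map_zero]⟩
    · intro s t hs ht x hx hxZ
      obtain ⟨Vs, hxVs, hVsU, hs0⟩ := hs x hx hxZ
      obtain ⟨Vt, hxVt, hVtU, ht0⟩ := ht x hx hxZ
      refine ⟨Vs ⊓ Vt, ⟨hxVs, hxVt⟩, inf_le_left.trans hVsU, ?_⟩
      rw [map_add, ← DecompAux.decomp_map_map M (inf_le_left : Vs ⊓ Vt ≤ Vs) hVsU,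
        ← DecompAux.decomp_map_map M (inf_le_right : Vs ⊓ Vt ≤ Vt) hVtU, hs0, ht0, map_zero, map_zero,
        add_zero]
    · intro r s hs x hx hxZ
      obtain ⟨V, hxV, hVU, hs0⟩ := hs x hx hxZ
      exact ⟨V, hxV, hVU, by rw [hcomp, hs0, smul_zero]⟩
  · -- restriction stability
    intro Z _ U V hVU s hs x hx hxZ
    obtain ⟨W, hxW, hWU, hs0⟩ := hs x (hVU hx) hxZ
    refine ⟨W ⊓ V, ⟨hxW, hx⟩, inf_le_right, ?_⟩
    rw [DecompAux.decomp_map_map M (inf_le_right : W ⊓ V ≤ V) hVU,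
      ← DecompAux.decomp_map_map M (inf_le_left : W ⊓ V ≤ W) hWU, hs0, map_zero]
  · -- decomposition
    intro U m
    set W₁ : Opens X := U ⊓ ⟨Z₂ᶜ, hZ₂.isOpen_compl⟩ with hW₁def
    set W₂ : Opens X := U ⊓ ⟨Z₁ᶜ, hZ₁.isOpen_compl⟩ with hW₂def
    have hW₁U : W₁ ≤ U := inf_le_left
    have hW₂U : W₂ ≤ U := inf_le_left
    set Us : ULift Bool → Opens X := fun b => bif b.down then W₁ else W₂ with hUs
    have hcover : U ≤ iSup Us := by
      intro x hx
      have : x ∈ iSup Us := by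
        rw [Opens.mem_iSup]
        by_cases h1 : x ∈ Z₁
        · exact ⟨⟨true⟩, hx, fun h2 => hdisj.le_bot ⟨h1, h2⟩⟩
        · exact ⟨⟨false⟩, hx, h1⟩
      exact this
    -- key: m restricted to W₁ ⊓ W₂ is zero
    have hkey : M.map (homOfLE ((inf_le_left.trans hW₁U) : W₁ ⊓ W₂ ≤ U)).op m = 0 := by
      apply DecompAux.decomp_eq_zero_of_locally_zero hM
      intro x hx
      have hxU : x ∈ (U : Set X) := hW₁U hx.1
      have hxZ : x ∉ Z₁ ∪ Z₂ := by
        rintro (h | h)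
        · exact hx.2.2 h
        · exact hx.1.2 h
      obtain ⟨V, hxV, hVU, h0⟩ := hstalk U m x hxU hxZ
      refine ⟨V ⊓ (W₁ ⊓ W₂), ⟨hxV, hx⟩, inf_le_right, ?_⟩
      rw [DecompAux.decomp_map_map M (inf_le_right : V ⊓ (W₁ ⊓ W₂) ≤ W₁ ⊓ W₂) (inf_le_left.trans hW₁U),
        ← DecompAux.decomp_map_map M (inf_le_left : V ⊓ (W₁ ⊓ W₂) ≤ V) hVU, h0, map_zero]
    have hkey' : ∀ (W : Opens X) (hW : W ≤ W₁ ⊓ W₂), M.map (homOfLE (hW.trans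
        (inf_le_left.trans hW₁U) : W ≤ U)).op m = 0 := by
      intro W hW
      rw [← DecompAux.decomp_map_map M hW (inf_le_left.trans hW₁U), hkey, map_zero]
    set iUV : ∀ b, Us b ⟶ U := fun b => match b with
      | ⟨true⟩ => homOfLE hW₁U
      | ⟨false⟩ => homOfLE hW₂U with hiUV
    set sf : ∀ b, M.obj (op (Us b)) := fun b => match b with
      | ⟨true⟩ => M.map (homOfLE hW₁U).op m
      | ⟨false⟩ => 0 with hsf
    obtain ⟨s₁, hs₁, -⟩ := DecompAux.addGlue hM Us U iUV hcover sf (by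
      rintro ⟨i⟩ ⟨j⟩
      cases i <;> cases j
      · show M.map _ (0 : M.obj (op W₂)) = M.map _ (0 : M.obj (op W₂))
        rw [map_zero, map_zero]
      · show M.map (homOfLE (inf_le_left : W₂ ⊓ W₁ ≤ W₂)).op (0 : M.obj (op W₂))
          = M.map (homOfLE (inf_le_right : W₂ ⊓ W₁ ≤ W₁)).op (M.map (homOfLE hW₁U).op m)
        rw [map_zero, DecompAux.decomp_map_map M (inf_le_right : W₂ ⊓ W₁ ≤ W₁) hW₁U]
        exact (hkey' (W₂ ⊓ W₁) (by rw [inf_comm])).symm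
      · show M.map (homOfLE (inf_le_left : W₁ ⊓ W₂ ≤ W₁)).op (M.map (homOfLE hW₁U).op m)
          = M.map (homOfLE (inf_le_right : W₁ ⊓ W₂ ≤ W₂)).op (0 : M.obj (op W₂))
        rw [map_zero, DecompAux.decomp_map_map M (inf_le_left : W₁ ⊓ W₂ ≤ W₁) hW₁U]
        exact hkey' (W₁ ⊓ W₂) le_rfl
      · show M.map (homOfLE (inf_le_left : W₁ ⊓ W₁ ≤ W₁)).op (M.map (homOfLE hW₁U).op m)
          = M.map (homOfLE (inf_le_right : W₁ ⊓ W₁ ≤ W₁)).op (M.map (homOfLE hW₁U).op m)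
        rfl
    )
    have hs₁W₁ : M.map (homOfLE hW₁U).op s₁ = M.map (homOfLE hW₁U).op m := hs₁ ⟨true⟩
    have hs₁W₂ : M.map (homOfLE hW₂U).op s₁ = 0 := hs₁ ⟨false⟩
    have hs₁N : s₁ ∈ sectionsVanishingOutside M Z₁ U := by
      intro x hx hxZ
      exact ⟨W₂, ⟨hx, hxZ⟩, hW₂U, hs₁W₂⟩
    have hs₂N : m - s₁ ∈ sectionsVanishingOutside M Z₂ U := by
      intro x hx hxZ
      refine ⟨W₁, ⟨hx, hxZ⟩, hW₁U, ?_⟩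
      rw [map_sub, hs₁W₁, sub_self]
    refine ⟨(⟨s₁, hs₁N⟩, ⟨m - s₁, hs₂N⟩), by simp, ?_⟩
    rintro ⟨⟨t₁, ht₁⟩, ⟨t₂, ht₂⟩⟩ hq
    simp only at hq
    have hd : t₁ - s₁ = 0 := by
      apply DecompAux.decomp_eq_zero_of_locally_zero hM
      intro x hx
      by_cases h1 : x ∈ Z₁
      · have h2 : x ∉ Z₂ := fun h2 => hdisj.le_bot ⟨h1, h2⟩
        obtain ⟨Va, hxVa, hVaU, ha⟩ := ht₂ x hx h2
        obtain ⟨Vb, hxVb, hVbU, hb⟩ := hs₂N x hx h2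
        refine ⟨Va ⊓ Vb, ⟨hxVa, hxVb⟩, inf_le_left.trans hVaU, ?_⟩
        have heq : t₁ - s₁ = (m - s₁) - t₂ := by rw [← hq]; abel
        have hA : M.map (homOfLE (inf_le_left.trans hVaU : Va ⊓ Vb ≤ U)).op t₂ = 0 := by
          rw [← DecompAux.decomp_map_map M (inf_le_left : Va ⊓ Vb ≤ Va) hVaU, ha, map_zero]
        have hB : M.map (homOfLE (inf_le_left.trans hVaU : Va ⊓ Vb ≤ U)).op (m - s₁) = 0 := by
          rw [← DecompAux.decomp_map_map M (inf_le_right : Va ⊓ Vb ≤ Vb) hVbU, hb, map_zero]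
        rw [heq, map_sub, hA, hB, sub_zero]
      · obtain ⟨Va, hxVa, hVaU, ha⟩ := ht₁ x hx h1
        obtain ⟨Vb, hxVb, hVbU, hb⟩ := hs₁N x hx h1
        refine ⟨Va ⊓ Vb, ⟨hxVa, hxVb⟩, inf_le_left.trans hVaU, ?_⟩
        have hA : M.map (homOfLE (inf_le_left.trans hVaU : Va ⊓ Vb ≤ U)).op t₁ = 0 := by
          rw [← DecompAux.decomp_map_map M (inf_le_left : Va ⊓ Vb ≤ Va) hVaU, ha, map_zero]
        have hB : M.map (homOfLE (inf_le_left.trans hVaU : Va ⊓ Vb ≤ U)).op s₁ = 0 := by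
          rw [← DecompAux.decomp_map_map M (inf_le_right : Va ⊓ Vb ≤ Vb) hVbU, hb, map_zero]
        rw [map_sub, hA, hB, sub_zero]
    have h1 : t₁ = s₁ := by rwa [sub_eq_zero] at hd
    have h2 : t₂ = m - s₁ := by rw [← hq, h1]; abel
    exact Prod.ext (Subtype.ext h1) (Subtype.ext h2)
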